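/- arXiv:math/0305039 — 3 statements merged into one kernel-verified Lean document; each statement's English description precedes it below -/
import Mathlib

section
/- In the embedded HMM update, the probability of starting at sequence x (drawn from π), choosing offsets J_t, generating the given candidate pools via kernels R_t and their reversals R̃_t, and then selecting sequence x' with probability proportional to π(x')/∏_t ρ_t(x'_t) over pool sequences, equals (1/K)^n · [π(x)·π(x') / ∏_t ρ_t(x_t)·ρ_t(x'_t)] · ∏_t [ρ_t(x_t^[−K+J_t+1]) · ∏_{j=−K+J_t+1}^{J_t−1} R_t(x_t^[j+1] | x_t^[j])] / Z, where Z is the normalizing constant over sequences in the pools. -/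
open Finset

private lemma int_Ico_eq_Icc (a b : ℤ) : Finset.Ico a (b + 1) = Finset.Icc a b := by
  ext j; simp only [Finset.mem_Ico, Finset.mem_Icc]; omega

private lemma tel_int (g : ℤ → ℝ) (hg : ∀ j, g j ≠ 0) (a : ℤ) :
    ∀ b, a ≤ b → ∏ j ∈ Finset.Ico a b, (g j / g (j + 1)) = g a / g b := by
  refine Int.le_induction ?_ ?_
  · simp [div_self (hg a)]
  · intro b hb ih
    rw [← Finset.Ico_union_Ico_eq_Ico hb (by omega : b ≤ b + 1),
      Finset.prod_union (Finset.Ico_disjoint_Ico_consecutive a b (b + 1))]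
    have : Finset.Ico b (b + 1) = {b} := by
      ext j; simp only [Finset.mem_Ico, Finset.mem_singleton]; omega
    rw [ih, this, Finset.prod_singleton, div_mul_div_comm, mul_comm (g a) (g b),
      mul_div_mul_left _ _ (hg b)]

private lemma bracket_eq {X : Type*} (g : ℤ → X) (ρ : X → ℝ) (hρ : ∀ s, 0 < ρ s)
    (R : X → X → ℝ) (a b : ℤ) (ha : a ≤ 0) (hb : 0 ≤ b) :
    (∏ j ∈ Finset.Icc 1 b, R (g (j - 1)) (g j)) *
      ∏ j ∈ Finset.Icc a (-1), (ρ (g j) * R (g j) (g (j + 1)) / ρ (g (j + 1)))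
    = (ρ (g a) / ρ (g 0)) * ∏ j ∈ Finset.Icc a (b - 1), R (g j) (g (j + 1)) := by
  have hmap : Finset.Icc 1 b = (Finset.Ico 0 b).map (addRightEmbedding 1) := by
    have h : Finset.Ico 0 b = Finset.Icc 0 (b - 1) := by
      rw [← int_Ico_eq_Icc]; ring_nf
    rw [h, Finset.map_add_right_Icc]; norm_num
  have h1 : (∏ j ∈ Finset.Icc 1 b, R (g (j - 1)) (g j))
      = ∏ j ∈ Finset.Ico 0 b, R (g j) (g (j + 1)) := by
    rw [hmap, Finset.prod_map]
    refine Finset.prod_congr rfl fun j _ => ?_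
    simp [addRightEmbedding]
  have h2 : (∏ j ∈ Finset.Icc a (-1), (ρ (g j) * R (g j) (g (j + 1)) / ρ (g (j + 1))))
      = (ρ (g a) / ρ (g 0)) * ∏ j ∈ Finset.Ico a 0, R (g j) (g (j + 1)) := by
    have h : Finset.Icc a (-1) = Finset.Ico a 0 := by
      rw [← int_Ico_eq_Icc]; norm_num
    rw [h, ← tel_int (fun j => ρ (g j)) (fun j => (hρ (g j)).ne') a 0 ha,
      ← Finset.prod_mul_distrib]
    exact Finset.prod_congr rfl fun j _ => by rw [mul_div_right_comm]
  rw [h1, h2,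
    (by rw [← int_Ico_eq_Icc]; ring_nf : Finset.Icc a (b - 1) = Finset.Ico a b),
    ← Finset.Ico_union_Ico_eq_Ico ha hb,
    Finset.prod_union (Finset.Ico_disjoint_Ico_consecutive a 0 b)]
  ring

/-- Equation (7) of the paper: the probability of starting at `x` (drawn from `π`),
picking offsets `J t`, generating the given candidate pools `c t` via the kernels `R t`
and their reversals `Rrev t`, and then selecting `x'` with probability proportional to
`π(x')/∏_t ρ_t(x'_t)` among pool sequences, equals
`(1/K)^n · [π(x)π(x')/∏_t ρ_t(x_t)ρ_t(x'_t)] · ∏_t [ρ_t(x_t^[-K+J_t+1]) ·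
∏_{j=-K+J_t+1}^{J_t-1} R_t(x_t^[j+1]|x_t^[j])] / Z`. -/
theorem embedded_hmm_move_probability
    {X : Type*} [Fintype X] (n : ℕ)
    (π : (Fin n → X) → ℝ) (hπ : ∀ s, 0 < π s)
    (ρ : Fin n → X → ℝ) (hρ : ∀ t s, 0 < ρ t s)
    (R : Fin n → X → X → ℝ) (hR : ∀ t s s', 0 ≤ R t s s')
    (hR1 : ∀ t s, ∑ s', R t s s' = 1)
    (hinv : ∀ t s', ∑ s, ρ t s * R t s s' = ρ t s')
    (Rrev : Fin n → X → X → ℝ)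
    (hRrev : ∀ t s' s, Rrev t s' s = ρ t s * R t s s' / ρ t s')
    (K : ℤ) (hK : 1 ≤ K)
    (J : Fin n → ℤ) (hJ0 : ∀ t, 0 ≤ J t) (hJK : ∀ t, J t ≤ K - 1)
    -- the candidate pools: `c t j` is the state `x_t^[j]`, with `c t 0` the current state
    (c : Fin n → ℤ → X)
    (x x' : Fin n → X)
    (hc0 : ∀ t, c t 0 = x t)
    (hx' : ∀ t, ∃ j, -K + J t + 1 ≤ j ∧ j ≤ J t ∧ c t j = x' t)
    -- the normalizing constant over sequences with states in the pools
    (Z : ℝ)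
    (hZ : Z = ∑ h : (t : Fin n) → (Finset.Icc (-K + J t + 1) (J t) : Finset ℤ),
            π (fun t => c t (h t)) / ∏ t, ρ t (c t (h t))) :
    π x * (1 / (K : ℝ)) ^ n *
      (∏ t, ((∏ j ∈ Finset.Icc 1 (J t), R t (c t (j - 1)) (c t j)) *
              ∏ j ∈ Finset.Icc (-K + J t + 1) (-1), Rrev t (c t (j + 1)) (c t j))) *
      ((π x' / ∏ t, ρ t (x' t)) / Z)
    = (1 / (K : ℝ)) ^ n * (π x * π x' / ∏ t, (ρ t (x t) * ρ t (x' t))) *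
        (∏ t, (ρ t (c t (-K + J t + 1)) *
               ∏ j ∈ Finset.Icc (-K + J t + 1) (J t - 1), R t (c t j) (c t (j + 1)))) / Z := by
  have key : ∀ t, ((∏ j ∈ Finset.Icc 1 (J t), R t (c t (j - 1)) (c t j)) *
        ∏ j ∈ Finset.Icc (-K + J t + 1) (-1), Rrev t (c t (j + 1)) (c t j))
      = (ρ t (c t (-K + J t + 1)) / ρ t (x t)) *
        ∏ j ∈ Finset.Icc (-K + J t + 1) (J t - 1), R t (c t j) (c t (j + 1)) := by
    intro t
    have := bracket_eq (c t) (ρ t) (hρ t) (R t) (-K + J t + 1) (J t)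
      (by have := hJK t; omega) (hJ0 t)
    rw [hc0 t] at this
    rw [← this]
    refine congrArg _ (Finset.prod_congr rfl fun j _ => ?_)
    rw [hRrev]
  have hPx : (0 : ℝ) < ∏ t, ρ t (x t) := Finset.prod_pos fun t _ => hρ t (x t)
  have hPx' : (0 : ℝ) < ∏ t, ρ t (x' t) := Finset.prod_pos fun t _ => hρ t (x' t)
  rw [Finset.prod_congr rfl fun t _ => key t, Finset.prod_mul_distrib,
    Finset.prod_div_distrib, Finset.prod_mul_distrib, Finset.prod_mul_distrib]
  rw [← mul_div_assoc]
  congr 1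
  field_simp
end

section
/- The embedded HMM transition kernel Q satisfies detailed balance with respect to π: for all sequences x, x' in 𝒳^n, π(x)·Q(x'|x) = π(x')·Q(x|x'), where Q(x'|x) is the total probability, summed over all offset choices and pool realizations, of moving from x to x' in one embedded HMM update. -/
open Finset

section EmbeddedHMM

variable {X : Type*} [Fintype X] [DecidableEq X] {n K : ℕ} [NeZero K]

/-- Look up a pool entry by a natural-number index (indices `0,…,K-1` are used). -/
def poolGet (p : Fin K → X) (i : ℕ) : X := p ⟨i % K, Nat.mod_lt _ (NeZero.pos K)⟩

/-- Probability of generating the pool `p` (indexed `0,…,K-1`, with the current state at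
position `i₀ = K-1-J`): states above `i₀` are generated forward using `R` and states
below `i₀` are generated backward using the reversal kernel `Rrev`.
(`R x x'` is the probability of a transition from `x` to `x'`.) -/
def genProb (R Rrev : X → X → ℝ) (i₀ : ℕ) (p : Fin K → X) : ℝ :=
  (∏ i ∈ Finset.Ico (i₀ + 1) K, R (poolGet p (i - 1)) (poolGet p i)) *
    ∏ i ∈ Finset.range i₀, Rrev (poolGet p (i + 1)) (poolGet p i)

/-- The unnormalized selection weight `π(x)/∏_t ρ_t(x_t)` of the pool sequence picked out
by the index sequence `h`. -/
noncomputable def selWeight (π : (Fin n → X) → ℝ) (ρ : Fin n → X → ℝ)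
    (p : Fin n → Fin K → X) (h : Fin n → Fin K) : ℝ :=
  π (fun t => p t (h t)) / ∏ t, ρ t (p t (h t))

/-- The embedded HMM transition kernel: pick each offset `J t` uniformly from
`{0,…,K-1}`, generate pools containing the current state `x t` at position `K-1-J t`,
then select a new sequence among pool sequences with probability proportional to
`π/∏ ρ_t`.  `ehmmQ (K := K) π ρ R Rrev x x'` is the total probability of moving from `x` to `x'`. -/
noncomputable def ehmmQ (π : (Fin n → X) → ℝ) (ρ : Fin n → X → ℝ)
    (R Rrev : Fin n → X → X → ℝ) (x x' : Fin n → X) : ℝ :=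
  ((K : ℝ))⁻¹ ^ n *
    ∑ J : Fin n → Fin K, ∑ p : Fin n → Fin K → X,
      (∏ t, (if poolGet (p t) (K - 1 - (J t : ℕ)) = x t then
               genProb (R t) (Rrev t) (K - 1 - (J t : ℕ)) (p t) else 0)) *
        ((∑ h : Fin n → Fin K,
            if (∀ t, p t (h t) = x' t) then selWeight π ρ p h else 0) /
          ∑ h : Fin n → Fin K, selWeight π ρ p h)

end EmbeddedHMM

section EmbeddedHMMAux
variable {X : Type*} [Fintype X] [DecidableEq X] {n K : ℕ} [NeZero K]

lemma poolGet_coe (p : Fin K → X) (i : Fin K) : poolGet p (i : ℕ) = p i := by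
  simp [poolGet, Nat.mod_eq_of_lt i.isLt]

noncomputable def Wp (R : X → X → ℝ) (ρ : X → ℝ) (p : Fin K → X) : ℝ :=
  ρ (poolGet p 0) * ∏ i ∈ Finset.Ico 1 K, R (poolGet p (i - 1)) (poolGet p i)

lemma back_prod (R Rrev : X → X → ℝ) (ρ : X → ℝ) (hρ : ∀ s, 0 < ρ s)
    (hRrev : ∀ s' s, Rrev s' s = ρ s * R s s' / ρ s') (p : Fin K → X) (i₀ : ℕ) :
    ρ (poolGet p i₀) * ∏ i ∈ Finset.range i₀, Rrev (poolGet p (i + 1)) (poolGet p i)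
      = ρ (poolGet p 0) * ∏ i ∈ Finset.range i₀, R (poolGet p i) (poolGet p (i + 1)) := by
  induction i₀ with
  | zero => simp
  | succ m ih =>
    rw [Finset.prod_range_succ, Finset.prod_range_succ]
    have h1 : ρ (poolGet p (m + 1)) * Rrev (poolGet p (m + 1)) (poolGet p m)
        = ρ (poolGet p m) * R (poolGet p m) (poolGet p (m + 1)) := by
      rw [hRrev]
      rw [mul_comm]
      exact div_mul_cancel₀ _ (hρ _).ne'
    linear_combination (∏ i ∈ Finset.range m, Rrev (poolGet p (i + 1)) (poolGet p i)) * h1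
      + R (poolGet p m) (poolGet p (m + 1)) * ih

lemma key_gen (R Rrev : X → X → ℝ) (ρ : X → ℝ) (hρ : ∀ s, 0 < ρ s)
    (hRrev : ∀ s' s, Rrev s' s = ρ s * R s s' / ρ s') (p : Fin K → X)
    {i₀ : ℕ} (hi : i₀ < K) :
    ρ (poolGet p i₀) * genProb R Rrev i₀ p = Wp R ρ p := by
  unfold genProb Wp
  have h1 : ρ (poolGet p i₀) *
      ((∏ i ∈ Finset.Ico (i₀ + 1) K, R (poolGet p (i - 1)) (poolGet p i)) *
        ∏ i ∈ Finset.range i₀, Rrev (poolGet p (i + 1)) (poolGet p i))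
      = (∏ i ∈ Finset.Ico (i₀ + 1) K, R (poolGet p (i - 1)) (poolGet p i)) *
        (ρ (poolGet p 0) * ∏ i ∈ Finset.range i₀, R (poolGet p i) (poolGet p (i + 1))) := by
    rw [← back_prod R Rrev ρ hρ hRrev p i₀]; ring
  rw [h1]
  have h2 : ∏ i ∈ Finset.range i₀, R (poolGet p i) (poolGet p (i + 1))
      = ∏ i ∈ Finset.Ico 1 (i₀ + 1), R (poolGet p (i - 1)) (poolGet p i) := by
    rw [Finset.prod_Ico_eq_prod_range]
    simp [Nat.add_sub_cancel_left, Nat.add_comm]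
  rw [h2, ← Finset.prod_Ico_consecutive _ (Nat.le_add_left 1 i₀) hi]
  ring

/-- The index-reversal equivalence `j ↦ K-1-j` on `Fin K`. -/
def revIdx : Fin K ≃ Fin K where
  toFun j := ⟨K - 1 - (j : ℕ), by have := NeZero.pos K; omega⟩
  invFun j := ⟨K - 1 - (j : ℕ), by have := NeZero.pos K; omega⟩
  left_inv j := by ext; have := j.isLt; simp; omega
  right_inv j := by ext; have := j.isLt; simp; omega

lemma step1 (π : (Fin n → X) → ℝ) (ρ : Fin n → X → ℝ) (hρ : ∀ t s, 0 < ρ t s)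
    (R Rrev : Fin n → X → X → ℝ)
    (hRrev : ∀ t s' s, Rrev t s' s = ρ t s * R t s s' / ρ t s')
    (x : Fin n → X) (p : Fin n → Fin K → X) (h : Fin n → Fin K) :
    π x * ∏ t, (if poolGet (p t) ((h t : ℕ)) = x t then
        genProb (R t) (Rrev t) ((h t : ℕ)) (p t) else 0)
      = (∏ t, Wp (R t) (ρ t) (p t)) *
        (if (∀ t, p t (h t) = x t) then selWeight π ρ p h else 0) := by
  by_cases hc : ∀ t, p t (h t) = x t
  · have hid : ∀ t, poolGet (p t) ((h t : ℕ)) = x t := fun t => by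
      rw [poolGet_coe]; exact hc t
    rw [if_pos hc, Finset.prod_congr rfl (fun t _ => if_pos (hid t))]
    have hW : ∀ t, Wp (R t) (ρ t) (p t)
        = ρ t (x t) * genProb (R t) (Rrev t) ((h t : ℕ)) (p t) := fun t => by
      rw [← key_gen (R t) (Rrev t) (ρ t) (hρ t) (hRrev t) (p t) (h t).isLt, hid t]
    rw [Finset.prod_congr rfl (fun t _ => hW t), Finset.prod_mul_distrib]
    unfold selWeight
    have hx : (fun t => p t (h t)) = x := funext hc
    rw [hx]
    have hprod : (∏ t, ρ t (p t (h t))) = ∏ t, ρ t (x t) :=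
      Finset.prod_congr rfl fun t _ => by rw [hc t]
    rw [hprod]
    have hne : (∏ t, ρ t (x t)) ≠ 0 :=
      (Finset.prod_pos fun t _ => hρ t (x t)).ne'
    field_simp
  · rw [if_neg hc, mul_zero]
    push_neg at hc
    obtain ⟨t, ht⟩ := hc
    rw [Finset.prod_eq_zero (Finset.mem_univ t), mul_zero]
    rw [if_neg]
    rw [poolGet_coe]
    exact ht

lemma ehmm_factor (π : (Fin n → X) → ℝ) (ρ : Fin n → X → ℝ) (hρ : ∀ t s, 0 < ρ t s)
    (R Rrev : Fin n → X → X → ℝ)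
    (hRrev : ∀ t s' s, Rrev t s' s = ρ t s * R t s s' / ρ t s')
    (x x' : Fin n → X) :
    π x * ehmmQ (K := K) π ρ R Rrev x x' =
      ((K : ℝ))⁻¹ ^ n * ∑ p : Fin n → Fin K → X,
        (∏ t, Wp (R t) (ρ t) (p t)) *
          ((∑ h : Fin n → Fin K, if (∀ t, p t (h t) = x t) then selWeight π ρ p h else 0) *
           (∑ h : Fin n → Fin K, if (∀ t, p t (h t) = x' t) then selWeight π ρ p h else 0) /
           ∑ h : Fin n → Fin K, selWeight π ρ p h) := by
  unfold ehmmQ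
  rw [mul_left_comm]
  congr 1
  rw [Finset.mul_sum]
  calc
    ∑ J : Fin n → Fin K, π x * ∑ p : Fin n → Fin K → X,
        (∏ t, (if poolGet (p t) (K - 1 - (J t : ℕ)) = x t then
               genProb (R t) (Rrev t) (K - 1 - (J t : ℕ)) (p t) else 0)) *
        ((∑ h : Fin n → Fin K,
            if (∀ t, p t (h t) = x' t) then selWeight π ρ p h else 0) /
          ∑ h : Fin n → Fin K, selWeight π ρ p h)
      = ∑ g : Fin n → Fin K, ∑ p : Fin n → Fin K → X,
          ((∏ t, Wp (R t) (ρ t) (p t)) *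
            (if (∀ t, p t (g t) = x t) then selWeight π ρ p g else 0)) *
          ((∑ h : Fin n → Fin K,
              if (∀ t, p t (h t) = x' t) then selWeight π ρ p h else 0) /
            ∑ h : Fin n → Fin K, selWeight π ρ p h) := by
        apply Fintype.sum_equiv (Equiv.piCongrRight (fun _ : Fin n => (revIdx : Fin K ≃ Fin K)))
        intro J
        rw [Finset.mul_sum]
        refine Finset.sum_congr rfl fun p _ => ?_
        rw [← mul_assoc]
        exact congrArg (· * _) (step1 π ρ hρ R Rrev hRrev x p (fun t => revIdx (J t)))
    _ = ∑ p : Fin n → Fin K → X, ∑ g : Fin n → Fin K,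
          ((∏ t, Wp (R t) (ρ t) (p t)) *
            (if (∀ t, p t (g t) = x t) then selWeight π ρ p g else 0)) *
          ((∑ h : Fin n → Fin K,
              if (∀ t, p t (h t) = x' t) then selWeight π ρ p h else 0) /
            ∑ h : Fin n → Fin K, selWeight π ρ p h) := Finset.sum_comm
    _ = _ := by
        refine Finset.sum_congr rfl fun p _ => ?_
        rw [← Finset.sum_mul, ← Finset.mul_sum]
        ring

end EmbeddedHMMAux


/-- The embedded HMM transition kernel satisfies detailed balance with respect to the
target distribution `π` on sequences. -/
theorem embedded_hmm_detailed_balance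
    {X : Type*} [Fintype X] [DecidableEq X] {n K : ℕ} [NeZero K]
    (π : (Fin n → X) → ℝ) (hπ : ∀ s, 0 < π s)
    (ρ : Fin n → X → ℝ) (hρ : ∀ t s, 0 < ρ t s)
    (R : Fin n → X → X → ℝ) (hR : ∀ t s s', 0 ≤ R t s s')
    (hR1 : ∀ t s, ∑ s', R t s s' = 1)
    (hinv : ∀ t s', ∑ s, ρ t s * R t s s' = ρ t s')
    (Rrev : Fin n → X → X → ℝ)
    (hRrev : ∀ t s' s, Rrev t s' s = ρ t s * R t s s' / ρ t s') :
    ∀ x x' : Fin n → X,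
      π x * ehmmQ (K := K) π ρ R Rrev x x' = π x' * ehmmQ (K := K) π ρ R Rrev x' x := by
  intro x x'
  rw [ehmm_factor π ρ hρ R Rrev hRrev x x', ehmm_factor π ρ hρ R Rrev hRrev x' x]
  congr 1
  refine Finset.sum_congr rfl fun p _ => ?_
  ring
end

section
/- If for each t = 0,...,n−1 a kernel R_t on a finite space 𝒳 has all entries strictly positive, and π is strictly positive on 𝒳^n, then the embedded HMM kernel Q assigns positive probability to every transition x → x' in 𝒳^n, and hence the embedded HMM Markov chain is ergodic (irreducible and aperiodic). -/
open Finset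

open Matrix

/-- If every kernel `R t` has all entries strictly positive (and the pool size satisfies
`K ≥ 2`, with `π` strictly positive), then the embedded HMM kernel assigns positive
probability to every transition, and hence the embedded HMM chain is ergodic:
irreducible and aperiodic. -/
theorem embedded_hmm_ergodic
    {X : Type*} [Fintype X] [DecidableEq X] [Nonempty X] {n K : ℕ} [NeZero K]
    (hK2 : 2 ≤ K)
    (π : (Fin n → X) → ℝ) (hπ : ∀ s, 0 < π s)
    (ρ : Fin n → X → ℝ) (hρ : ∀ t s, 0 < ρ t s)
    (R : Fin n → X → X → ℝ) (hRpos : ∀ t s s', 0 < R t s s')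
    (hR1 : ∀ t s, ∑ s', R t s s' = 1)
    (hinv : ∀ t s', ∑ s, ρ t s * R t s s' = ρ t s')
    (Rrev : Fin n → X → X → ℝ)
    (hRrev : ∀ t s' s, Rrev t s' s = ρ t s * R t s s' / ρ t s') :
    (∀ x x' : Fin n → X, 0 < ehmmQ (K := K) π ρ R Rrev x x') ∧
      (∀ x x' : Fin n → X, ∃ m, 1 ≤ m ∧
        0 < ((Matrix.of fun a b : Fin n → X => ehmmQ (K := K) π ρ R Rrev a b) ^ m) x x') ∧
      (∀ x : Fin n → X, ∀ d : ℕ,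
        (∀ m, 1 ≤ m →
            0 < ((Matrix.of fun a b : Fin n → X => ehmmQ (K := K) π ρ R Rrev a b) ^ m) x x →
            d ∣ m) →
        d = 1) := by
  have hKpos := NeZero.pos K
  have hK1lt : K - 1 < K := Nat.sub_lt hKpos one_pos
  have hK1ne : K - 1 ≠ 0 := Nat.sub_ne_zero_of_lt hK2
  have hRrevpos : ∀ t s' s, 0 < Rrev t s' s := fun t s' s => by
    rw [hRrev]; exact div_pos (mul_pos (hρ t s) (hRpos t s s')) (hρ t s')
  have hgen : ∀ (t : Fin n) (i₀ : ℕ) (p : Fin K → X),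
      0 < genProb (R t) (Rrev t) i₀ p := fun t i₀ p =>
    mul_pos (Finset.prod_pos fun i _ => hRpos t _ _)
      (Finset.prod_pos fun i _ => hRrevpos t _ _)
  have hsel : ∀ (p : Fin n → Fin K → X) (h : Fin n → Fin K),
      0 < selWeight π ρ p h := fun p h =>
    div_pos (hπ _) (Finset.prod_pos fun t _ => hρ t _)
  have hterm_nonneg : ∀ (x x' : Fin n → X) (J : Fin n → Fin K)
      (p : Fin n → Fin K → X),
      0 ≤ (∏ t, (if poolGet (p t) (K - 1 - (J t : ℕ)) = x t then
               genProb (R t) (Rrev t) (K - 1 - (J t : ℕ)) (p t) else 0)) *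
        ((∑ h : Fin n → Fin K,
            if (∀ t, p t (h t) = x' t) then selWeight π ρ p h else 0) /
          ∑ h : Fin n → Fin K, selWeight π ρ p h) := by
    intro x x' J p
    apply mul_nonneg
    · exact Finset.prod_nonneg fun t _ => by
        split
        · exact (hgen _ _ _).le
        · rfl
    · apply div_nonneg
      · exact Finset.sum_nonneg fun h _ => by
          split
          · exact (hsel _ _).le
          · rfl
      · exact (Finset.sum_pos (fun h _ => hsel p h) Finset.univ_nonempty).le
  have hQ : ∀ x x', 0 < ehmmQ (K := K) π ρ R Rrev x x' := by
    intro x x'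
    apply mul_pos (pow_pos (inv_pos.mpr (by exact_mod_cast hKpos)) n)
    set J0 : Fin n → Fin K := fun _ => ⟨0, hKpos⟩ with hJ0
    set p0 : Fin n → Fin K → X := fun t i => if (i : ℕ) = K - 1 then x t else x' t
      with hp0
    refine Finset.sum_pos'
      (fun J _ => Finset.sum_nonneg fun p _ => hterm_nonneg x x' J p)
      ⟨J0, Finset.mem_univ _, ?_⟩
    refine Finset.sum_pos' (fun p _ => hterm_nonneg x x' J0 p)
      ⟨p0, Finset.mem_univ _, ?_⟩
    apply mul_pos
    · apply Finset.prod_pos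
      intro t _
      rw [if_pos]
      · exact hgen _ _ _
      · show poolGet (p0 t) (K - 1 - ((0 : ℕ))) = x t
        simp only [poolGet, hp0, Nat.sub_zero, Nat.mod_eq_of_lt hK1lt, if_pos rfl]
    · apply div_pos
      · refine Finset.sum_pos'
          (fun h _ => by split; exacts [(hsel _ _).le, le_refl 0])
          ⟨fun _ => ⟨0, hKpos⟩, Finset.mem_univ _, ?_⟩
        rw [if_pos]
        · exact hsel _ _
        · intro t
          simp only [hp0]
          exact if_neg fun h => hK1ne h.symm
      · exact Finset.sum_pos (fun h _ => hsel p0 h) Finset.univ_nonempty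
  refine ⟨hQ, fun x x' => ⟨1, le_rfl, by simpa using hQ x x'⟩, ?_⟩
  intro x d hd
  exact Nat.dvd_one.mp (hd 1 le_rfl (by simpa using hQ x x))
end
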